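/- Let N = [[1,1,0,0],[0,1,0,0],[0,0,1,1],[0,0,0,1]] and let Q = [[q₁,q₂,q₃,q₄],[q₂,q₅,q₆,q₇],[q₃,q₆,q₈,q₉],[q₄,q₇,q₉,q₁₀]] be an arbitrary real symmetric 4×4 matrix. Set g(r) = σ₂(exp(J₄ Q r)·N) and h(r) = σ₁(exp(J₄ Q r)·N)²/4 + 2. Then: (a) g′(0) = h′(0) for every such Q; (b) g″(0) ≤ h″(0), with equality if and only if q₃ = 0 and q₁ = q₈; (c) if q₃ = 0, q₁ = q₈, q₁ > 0 and q₄ ≠ q₆, then g‴(0) > h‴(0), and consequently g(r) > h(r) for all sufficiently small r > 0. -/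

import Mathlib

open Matrix

noncomputable section

/-- The block-diagonal complex structure `J₄ = diag(J, J)` on `ℝ⁴`. -/
def J4 : Matrix (Fin 4) (Fin 4) ℝ :=
  !![0, -1, 0, 0; 1, 0, 0, 0; 0, 0, 0, -1; 0, 0, 1, 0]

/-- The first symmetric function of the eigenvalues: `σ₁(M) = tr M`. -/
def sigma1 (M : Matrix (Fin 4) (Fin 4) ℝ) : ℝ := M.trace

/-- The second symmetric function of the eigenvalues: `σ₂(M) = ((tr M)² - tr(M²))/2`. -/
def sigma2 (M : Matrix (Fin 4) (Fin 4) ℝ) : ℝ := (M.trace ^ 2 - (M * M).trace) / 2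

def Nmat : Matrix (Fin 4) (Fin 4) ℝ :=
  !![1, 1, 0, 0; 0, 1, 0, 0; 0, 0, 1, 1; 0, 0, 0, 1]


set_option maxHeartbeats 4000000
namespace Stmt17Aux

open NormedSpace

abbrev Mat := Matrix (Fin 4) (Fin 4) ℝ

attribute [local instance] Matrix.linftyOpNormedAddCommGroup Matrix.linftyOpNormedRing
  Matrix.linftyOpNormedAlgebra

/-- The matrix exponential flow. -/
def E (A : Mat) (r : ℝ) : Mat := exp (r • A)

section WithNorm

lemma hE (A : Mat) (r : ℝ) : HasDerivAt (E A) (E A r * A) r :=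
  hasDerivAt_exp_smul_const A r

lemma E_zero (A : Mat) : E A 0 = 1 := by simp [E, exp_zero]

def traceCLM : Mat →L[ℝ] ℝ :=
  LinearMap.toContinuousLinearMap (Matrix.traceLinearMap (Fin 4) ℝ ℝ)

/-- `ψ_B(r) = tr(e^{rA} B)`. -/
def psi (A B : Mat) (r : ℝ) : ℝ := (E A r * B).trace

/-- `χ_{B,C}(r) = tr(e^{rA} B e^{rA} C)`. -/
def chi (A B C : Mat) (r : ℝ) : ℝ := (E A r * B * (E A r * C)).trace

lemma dpsi (A B : Mat) (r : ℝ) : HasDerivAt (psi A B) (psi A (A * B) r) r := by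
  have h := (hE A r).mul_const B
  have h2 := traceCLM.hasFDerivAt.comp_hasDerivAt r h
  have hfun : psi A B = fun x => (E A x * B).trace := by funext x; rw [psi]
  rw [hfun]
  exact h2.congr_deriv (by simp only [psi, mul_assoc]; rfl)

lemma dchi (A B C : Mat) (r : ℝ) :
    HasDerivAt (chi A B C) (chi A (A * B) C r + chi A B (A * C) r) r := by
  have h := ((hE A r).mul_const B).mul ((hE A r).mul_const C)
  have h2 := traceCLM.hasFDerivAt.comp_hasDerivAt r h
  have hfun : chi A B C = fun x => ((E A x * B) * (E A x * C)).trace := by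
    funext x; rw [chi]
  rw [hfun]
  exact h2.congr_deriv (by simp only [chi, mul_assoc]; exact Matrix.trace_add (E A r * (A * (B * (E A r * C)))) (E A r * (B * (E A r * (A * C)))))

end WithNorm

lemma chi_symm (A B C : Mat) (r : ℝ) : chi A B C r = chi A C B r := by
  simpa [chi, mul_assoc] using Matrix.trace_mul_comm (E A r * B) (E A r * C)

lemma psi_zero (A B : Mat) : psi A B 0 = B.trace := by
  rw [psi, E_zero, one_mul]

lemma chi_zero (A B C : Mat) : chi A B C 0 = (B * C).trace := by
  rw [chi, E_zero, one_mul, one_mul]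

lemma cont_psi (A B : Mat) : Continuous (psi A B) :=
  continuous_iff_continuousAt.2 fun r => (dpsi A B r).continuousAt

lemma cont_chi (A B C : Mat) : Continuous (chi A B C) :=
  continuous_iff_continuousAt.2 fun r => (dchi A B C r).continuousAt

/-- `g` and its first three derivative candidates. -/
def Gf (A : Mat) (r : ℝ) : ℝ := (psi A Nmat r * psi A Nmat r - chi A Nmat Nmat r) / 2

def G1f (A : Mat) (r : ℝ) : ℝ :=
  psi A Nmat r * psi A (A * Nmat) r - chi A (A * Nmat) Nmat r

def G2f (A : Mat) (r : ℝ) : ℝ :=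
  (psi A (A * Nmat) r * psi A (A * Nmat) r + psi A Nmat r * psi A (A * (A * Nmat)) r)
    - (chi A (A * (A * Nmat)) Nmat r + chi A (A * Nmat) (A * Nmat) r)

def G3f (A : Mat) (r : ℝ) : ℝ :=
  3 * (psi A (A * Nmat) r * psi A (A * (A * Nmat)) r)
    + psi A Nmat r * psi A (A * (A * (A * Nmat))) r
    - chi A (A * (A * (A * Nmat))) Nmat r - 3 * chi A (A * (A * Nmat)) (A * Nmat) r

/-- `h` and its first three derivative candidates. -/
def Hf (A : Mat) (r : ℝ) : ℝ := psi A Nmat r * psi A Nmat r / 4 + 2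

def H1f (A : Mat) (r : ℝ) : ℝ := psi A Nmat r * psi A (A * Nmat) r / 2

def H2f (A : Mat) (r : ℝ) : ℝ :=
  (psi A (A * Nmat) r * psi A (A * Nmat) r + psi A Nmat r * psi A (A * (A * Nmat)) r) / 2

def H3f (A : Mat) (r : ℝ) : ℝ :=
  (3 * (psi A (A * Nmat) r * psi A (A * (A * Nmat)) r)
    + psi A Nmat r * psi A (A * (A * (A * Nmat))) r) / 2

lemma dG (A : Mat) (r : ℝ) : HasDerivAt (Gf A) (G1f A r) r := by
  have h := (((dpsi A Nmat r).mul (dpsi A Nmat r)).sub (dchi A Nmat Nmat r)).div_const 2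
  refine h.congr_deriv ?_
  simp only [G1f]
  rw [chi_symm A Nmat (A * Nmat)]
  try ring

lemma dG1 (A : Mat) (r : ℝ) : HasDerivAt (G1f A) (G2f A r) r := by
  have h := ((dpsi A Nmat r).mul (dpsi A (A * Nmat) r)).sub (dchi A (A * Nmat) Nmat r)
  refine h.congr_deriv ?_
  try simp only [G2f]
  try ring

lemma dG2 (A : Mat) (r : ℝ) : HasDerivAt (G2f A) (G3f A r) r := by
  have h := ((((dpsi A (A * Nmat) r).mul (dpsi A (A * Nmat) r)).add
      ((dpsi A Nmat r).mul (dpsi A (A * (A * Nmat)) r))).sub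
      ((dchi A (A * (A * Nmat)) Nmat r).add (dchi A (A * Nmat) (A * Nmat) r)))
  refine h.congr_deriv ?_
  simp only [G3f]
  rw [chi_symm A (A * Nmat) (A * (A * Nmat))]
  try ring

lemma dH (A : Mat) (r : ℝ) : HasDerivAt (Hf A) (H1f A r) r := by
  have h := (((dpsi A Nmat r).mul (dpsi A Nmat r)).div_const 4).add_const 2
  refine h.congr_deriv ?_
  try simp only [H1f]
  try ring

lemma dH1 (A : Mat) (r : ℝ) : HasDerivAt (H1f A) (H2f A r) r := by
  have h := ((dpsi A Nmat r).mul (dpsi A (A * Nmat) r)).div_const 2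
  refine h.congr_deriv ?_
  try simp only [H2f]
  try ring

lemma dH2 (A : Mat) (r : ℝ) : HasDerivAt (H2f A) (H3f A r) r := by
  have h := (((dpsi A (A * Nmat) r).mul (dpsi A (A * Nmat) r)).add
      ((dpsi A Nmat r).mul (dpsi A (A * (A * Nmat)) r))).div_const 2
  refine h.congr_deriv ?_
  try simp only [H3f]
  try ring

lemma pos_of_deriv_pos {f : ℝ → ℝ} {e : ℝ} (he : 0 < e) (hc : Continuous f)
    (hf' : ∀ x ∈ Set.Ioo (0 : ℝ) e, 0 < deriv f x) (h0 : f 0 = 0) :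
    ∀ x ∈ Set.Ioo (0 : ℝ) e, 0 < f x := by
  intro x hx
  have hs : StrictMonoOn f (Set.Icc 0 e) :=
    strictMonoOn_of_deriv_pos (convex_Icc 0 e) hc.continuousOn
      (fun y hy => hf' y (by rwa [interior_Icc] at hy))
  have h := hs (Set.left_mem_Icc.2 he.le) ⟨hx.1.le, hx.2.le⟩ hx.1
  rwa [h0] at h

end Stmt17Aux

open Stmt17Aux

/-- The jet comparison of `g(r) = σ₂(exp(J₄ Q r)·N)` and
`h(r) = σ₁(exp(J₄ Q r)·N)²/4 + 2` at `r = 0` for an arbitrary symmetric `Q`. -/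
theorem stmt17 (q₁ q₂ q₃ q₄ q₅ q₆ q₇ q₈ q₉ q₁₀ : ℝ)
    (Q : Matrix (Fin 4) (Fin 4) ℝ)
    (hQ : Q = !![q₁, q₂, q₃, q₄; q₂, q₅, q₆, q₇; q₃, q₆, q₈, q₉; q₄, q₇, q₉, q₁₀])
    (g h : ℝ → ℝ)
    (hg : ∀ r, g r = sigma2 (NormedSpace.exp (r • (J4 * Q)) * Nmat))
    (hh : ∀ r, h r = sigma1 (NormedSpace.exp (r • (J4 * Q)) * Nmat) ^ 2 / 4 + 2) :
    -- (a)
    iteratedDeriv 1 g 0 = iteratedDeriv 1 h 0 ∧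
    -- (b)
    (iteratedDeriv 2 g 0 ≤ iteratedDeriv 2 h 0 ∧
      (iteratedDeriv 2 g 0 = iteratedDeriv 2 h 0 ↔ q₃ = 0 ∧ q₁ = q₈)) ∧
    -- (c)
    (q₃ = 0 → q₁ = q₈ → 0 < q₁ → q₄ ≠ q₆ →
      iteratedDeriv 3 h 0 < iteratedDeriv 3 g 0 ∧
      ∃ ε > (0 : ℝ), ∀ r ∈ Set.Ioo (0 : ℝ) ε, h r < g r) := by
  subst hQ
  obtain ⟨A, hAdef⟩ : ∃ A : Matrix (Fin 4) (Fin 4) ℝ,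
      A = J4 * !![q₁, q₂, q₃, q₄; q₂, q₅, q₆, q₇; q₃, q₆, q₈, q₉; q₄, q₇, q₉, q₁₀] := ⟨_, rfl⟩
  rw [← hAdef] at hg hh
  have hA : A = !![-q₂, -q₅, -q₆, -q₇; q₁, q₂, q₃, q₄; -q₄, -q₇, -q₉, -q₁₀; q₃, q₆, q₈, q₉] := by
    rw [hAdef]
    ext i j
    fin_cases i <;> fin_cases j <;>
      simp [Matrix.mul_apply, Fin.sum_univ_four, J4, Nmat, Matrix.vecHead, Matrix.vecTail, Matrix.cons_val_zero, Matrix.cons_val_one, Matrix.cons_val_two, Matrix.cons_val_three] <;> try ring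
  have hP1 : (!![-q₂, -q₅, -q₆, -q₇; q₁, q₂, q₃, q₄; -q₄, -q₇, -q₉, -q₁₀; q₃, q₆, q₈, q₉] : Matrix (Fin 4) (Fin 4) ℝ) * Nmat = !![-q₂, -q₂ - q₅, -q₆, -q₆ - q₇; q₁, q₁ + q₂, q₃, q₃ + q₄; -q₄, -q₄ - q₇, -q₉, -q₉ - q₁₀; q₃, q₃ + q₆, q₈, q₈ + q₉] := by
    ext i j
    fin_cases i <;> fin_cases j <;>
      simp [Matrix.mul_apply, Fin.sum_univ_four, J4, Nmat, Matrix.vecHead, Matrix.vecTail, Matrix.cons_val_zero, Matrix.cons_val_one, Matrix.cons_val_two, Matrix.cons_val_three] <;> try ring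
  have hP2 : (!![-q₂, -q₅, -q₆, -q₇; q₁, q₂, q₃, q₄; -q₄, -q₇, -q₉, -q₁₀; q₃, q₆, q₈, q₉] : Matrix (Fin 4) (Fin 4) ℝ) * !![-q₂, -q₂ - q₅, -q₆, -q₆ - q₇; q₁, q₁ + q₂, q₃, q₃ + q₄; -q₄, -q₄ - q₇, -q₉, -q₉ - q₁₀; q₃, q₃ + q₆, q₈, q₈ + q₉] = !![-q₁*q₅ + q₂^2 - q₃*q₇ + q₄*q₆, -q₁*q₅ + q₂^2 - q₃*q₇ + q₄*q₆, q₂*q₆ - q₃*q₅ + q₆*q₉ - q₇*q₈, q₂*q₆ + q₂*q₇ - q₃*q₅ - q₄*q₅ + q₆*q₉ + q₆*q₁₀ - q₇*q₈ - q₇*q₉; 0, -q₁*q₅ + q₂^2 - q₃*q₇ + q₄*q₆, -q₁*q₆ + q₂*q₃ - q₃*q₉ + q₄*q₈, -q₁*q₆ - q₁*q₇ + q₂*q₃ + q₂*q₄ - q₃*q₉ - q₃*q₁₀ + q₄*q₈ + q₄*q₉; -q₁*q₇ + q₂*q₄ - q₃*q₁₀ + q₄*q₉, -q₁*q₇ +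 q₂*q₄ - q₂*q₇ - q₃*q₁₀ + q₄*q₅ + q₄*q₉ - q₆*q₁₀ + q₇*q₉, -q₃*q₇ + q₄*q₆ - q₈*q₁₀ + q₉^2, -q₃*q₇ + q₄*q₆ - q₈*q₁₀ + q₉^2; q₁*q₆ - q₂*q₃ + q₃*q₉ - q₄*q₈, q₁*q₆ - q₂*q₃ + q₂*q₆ - q₃*q₅ + q₃*q₉ - q₄*q₈ + q₆*q₉ - q₇*q₈, 0, -q₃*q₇ + q₄*q₆ - q₈*q₁₀ + q₉^2] := by
    ext i j
    fin_cases i <;> fin_cases j <;>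
      simp [Matrix.mul_apply, Fin.sum_univ_four, J4, Nmat, Matrix.vecHead, Matrix.vecTail, Matrix.cons_val_zero, Matrix.cons_val_one, Matrix.cons_val_two, Matrix.cons_val_three] <;> try ring
  have fN : (Nmat).trace = 4 := by
    simp [Matrix.trace, Matrix.diag, Fin.sum_univ_four, Nmat, Matrix.vecHead, Matrix.vecTail, Matrix.cons_val_zero, Matrix.cons_val_one, Matrix.cons_val_two, Matrix.cons_val_three]
    try norm_num
  have fNN : (Nmat * Nmat).trace = 4 := by
    simp [Matrix.trace, Matrix.diag, Matrix.mul_apply, Fin.sum_univ_four, Nmat, Matrix.vecHead, Matrix.vecTail, Matrix.cons_val_zero, Matrix.cons_val_one, Matrix.cons_val_two, Matrix.cons_val_three]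
    try norm_num
  have e1 : ((!![-q₂, -q₂ - q₅, -q₆, -q₆ - q₇; q₁, q₁ + q₂, q₃, q₃ + q₄; -q₄, -q₄ - q₇, -q₉, -q₉ - q₁₀; q₃, q₃ + q₆, q₈, q₈ + q₉] : Matrix (Fin 4) (Fin 4) ℝ).trace : ℝ) = q₁ + q₈ := by
    simp [Matrix.trace, Matrix.diag, Matrix.mul_apply, Fin.sum_univ_four, Nmat, Matrix.vecHead, Matrix.vecTail, Matrix.cons_val_zero, Matrix.cons_val_one, Matrix.cons_val_two, Matrix.cons_val_three]
    try ring
  have e2 : ((!![-q₁*q₅ + q₂^2 - q₃*q₇ + q₄*q₆, -q₁*q₅ + q₂^2 - q₃*q₇ + q₄*q₆, q₂*q₆ - q₃*q₅ + q₆*q₉ - q₇*q₈, q₂*q₆ + q₂*q₇ - q₃*q₅ - q₄*q₅ + q₆*q₉ + q₆*q₁₀ - q₇*q₈ - q₇*q₉; 0, -q₁*q₅ + q₂^2 - q₃*q₇ + q₄*q₆, -q₁*q₆ + q₂*q₃ - q₃*q₉ + q₄*q₈, -q₁*q₆ - q₁*q₇ + q₂*q₃ + q₂*q₄ - q₃*q₉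 - q₃*q₁₀ + q₄*q₈ + q₄*q₉; -q₁*q₇ + q₂*q₄ - q₃*q₁₀ + q₄*q₉, -q₁*q₇ + q₂*q₄ - q₂*q₇ - q₃*q₁₀ + q₄*q₅ + q₄*q₉ - q₆*q₁₀ + q₇*q₉, -q₃*q₇ + q₄*q₆ - q₈*q₁₀ + q₉^2, -q₃*q₇ + q₄*q₆ - q₈*q₁₀ + q₉^2; q₁*q₆ - q₂*q₃ + q₃*q₉ - q₄*q₈, q₁*q₆ - q₂*q₃ + q₂*q₆ - q₃*q₅ + q₃*q₉ - q₄*q₈ + q₆*q₉ - q₇*q₈, 0, -q₃*q₇ + q₄*q₆ - q₈*q₁₀ + q₉^2] : Matrix (Fin 4) (Fin 4) ℝ).trace : ℝ) = -2*q₁*q₅ + 2*q₂^2 - 4*q₃*q₇ + 4*q₄*q₆ - 2*q₈*q₁₀ + 2*q₉^2 := by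
    simp [Matrix.trace, Matrix.diag, Matrix.mul_apply, Fin.sum_univ_four, Nmat, Matrix.vecHead, Matrix.vecTail, Matrix.cons_val_zero, Matrix.cons_val_one, Matrix.cons_val_two, Matrix.cons_val_three]
    try ring
  have e3 : (((!![-q₂, -q₅, -q₆, -q₇; q₁, q₂, q₃, q₄; -q₄, -q₇, -q₉, -q₁₀; q₃, q₆, q₈, q₉] : Matrix (Fin 4) (Fin 4) ℝ) * !![-q₁*q₅ + q₂^2 - q₃*q₇ + q₄*q₆, -q₁*q₅ + q₂^2 - q₃*q₇ + q₄*q₆, q₂*q₆ - q₃*q₅ + q₆*q₉ - q₇*q₈, q₂*q₆ + q₂*q₇ - q₃*q₅ - q₄*q₅ + q₆*q₉ + q₆*q₁₀ - q₇*q₈ - q₇*q₉; 0, -q₁*q₅ + q₂^2 - q₃*q₇ + q₄*q₆, -q₁*q₆ + q₂*q₃ - q₃*q₉ + q₄*q₈, -q₁*q₆ - q₁*q₇ + q₂*q₃ + q₂*q₄ - q₃*q₉ - q₃*q₁₀ + q₄*q₈ + q₄*q₉; -q₁*q₇ + q₂*q₄ - q₃*q₁₀ + q₄*q₉, -q₁*q₇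 + q₂*q₄ - q₂*q₇ - q₃*q₁₀ + q₄*q₅ + q₄*q₉ - q₆*q₁₀ + q₇*q₉, -q₃*q₇ + q₄*q₆ - q₈*q₁₀ + q₉^2, -q₃*q₇ + q₄*q₆ - q₈*q₁₀ + q₉^2; q₁*q₆ - q₂*q₃ + q₃*q₉ - q₄*q₈, q₁*q₆ - q₂*q₃ + q₂*q₆ - q₃*q₅ + q₃*q₉ - q₄*q₈ + q₆*q₉ - q₇*q₈, 0, -q₃*q₇ + q₄*q₆ - q₈*q₁₀ + q₉^2]).trace : ℝ) = -q₁^2*q₅ + q₁*q₂^2 - 2*q₁*q₃*q₇ + 2*q₁*q₄*q₆ - q₁*q₆^2 + 2*q₂*q₃*q₆ - q₃^2*q₅ - q₃^2*q₁₀ + 2*q₃*q₄*q₉ - 2*q₃*q₇*q₈ - q₄^2*q₈ + 2*q₄*q₆*q₈ - q₈^2*q₁₀ + q₈*q₉^2 := by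
    simp [Matrix.trace, Matrix.diag, Matrix.mul_apply, Fin.sum_univ_four, Nmat, Matrix.vecHead, Matrix.vecTail, Matrix.cons_val_zero, Matrix.cons_val_one, Matrix.cons_val_two, Matrix.cons_val_three]
    try ring
  have f10 : (((!![-q₂, -q₂ - q₅, -q₆, -q₆ - q₇; q₁, q₁ + q₂, q₃, q₃ + q₄; -q₄, -q₄ - q₇, -q₉, -q₉ - q₁₀; q₃, q₃ + q₆, q₈, q₈ + q₉] : Matrix (Fin 4) (Fin 4) ℝ) * Nmat).trace : ℝ) = 2*q₁ + 2*q₈ := by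
    simp [Matrix.trace, Matrix.diag, Matrix.mul_apply, Fin.sum_univ_four, Nmat, Matrix.vecHead, Matrix.vecTail, Matrix.cons_val_zero, Matrix.cons_val_one, Matrix.cons_val_two, Matrix.cons_val_three]
    try ring
  have f20 : (((!![-q₁*q₅ + q₂^2 - q₃*q₇ + q₄*q₆, -q₁*q₅ + q₂^2 - q₃*q₇ + q₄*q₆, q₂*q₆ - q₃*q₅ + q₆*q₉ - q₇*q₈, q₂*q₆ + q₂*q₇ - q₃*q₅ - q₄*q₅ + q₆*q₉ + q₆*q₁₀ - q₇*q₈ - q₇*q₉; 0, -q₁*q₅ + q₂^2 - q₃*q₇ + q₄*q₆, -q₁*q₆ + q₂*q₃ - q₃*q₉ + q₄*q₈, -q₁*q₆ - q₁*q₇ + q₂*q₃ + q₂*q₄ - q₃*q₉ - q₃*q₁₀ + q₄*q₈ + q₄*q₉; -q₁*q₇ + q₂*q₄ - q₃*q₁₀ + q₄*q₉, -q₁*q₇ + q₂*q₄ - q₂*q₇ - q₃*q₁₀ + q₄*q₅ + q₄*q₉ - q₆*q₁₀ + q₇*q₉, -q₃*q₇ + q₄*q₆ - q₈*q₁₀ +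 q₉^2, -q₃*q₇ + q₄*q₆ - q₈*q₁₀ + q₉^2; q₁*q₆ - q₂*q₃ + q₃*q₉ - q₄*q₈, q₁*q₆ - q₂*q₃ + q₂*q₆ - q₃*q₅ + q₃*q₉ - q₄*q₈ + q₆*q₉ - q₇*q₈, 0, -q₃*q₇ + q₄*q₆ - q₈*q₁₀ + q₉^2] : Matrix (Fin 4) (Fin 4) ℝ) * Nmat).trace : ℝ) = -2*q₁*q₅ + 2*q₂^2 - 4*q₃*q₇ + 4*q₄*q₆ - 2*q₈*q₁₀ + 2*q₉^2 := by
    simp [Matrix.trace, Matrix.diag, Matrix.mul_apply, Fin.sum_univ_four, Nmat, Matrix.vecHead, Matrix.vecTail, Matrix.cons_val_zero, Matrix.cons_val_one, Matrix.cons_val_two, Matrix.cons_val_three]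
    try ring
  have f11 : (((!![-q₂, -q₂ - q₅, -q₆, -q₆ - q₇; q₁, q₁ + q₂, q₃, q₃ + q₄; -q₄, -q₄ - q₇, -q₉, -q₉ - q₁₀; q₃, q₃ + q₆, q₈, q₈ + q₉] : Matrix (Fin 4) (Fin 4) ℝ) * !![-q₂, -q₂ - q₅, -q₆, -q₆ - q₇; q₁, q₁ + q₂, q₃, q₃ + q₄; -q₄, -q₄ - q₇, -q₉, -q₉ - q₁₀; q₃, q₃ + q₆, q₈, q₈ + q₉]).trace : ℝ) = q₁^2 - 2*q₁*q₅ + 2*q₂^2 + 2*q₃^2 - 4*q₃*q₇ + 4*q₄*q₆ + q₈^2 - 2*q₈*q₁₀ + 2*q₉^2 := by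
    simp [Matrix.trace, Matrix.diag, Matrix.mul_apply, Fin.sum_univ_four, Nmat, Matrix.vecHead, Matrix.vecTail, Matrix.cons_val_zero, Matrix.cons_val_one, Matrix.cons_val_two, Matrix.cons_val_three]
    try ring
  have f30 : ((((!![-q₂, -q₅, -q₆, -q₇; q₁, q₂, q₃, q₄; -q₄, -q₇, -q₉, -q₁₀; q₃, q₆, q₈, q₉] : Matrix (Fin 4) (Fin 4) ℝ) * !![-q₁*q₅ + q₂^2 - q₃*q₇ + q₄*q₆, -q₁*q₅ + q₂^2 - q₃*q₇ + q₄*q₆, q₂*q₆ - q₃*q₅ + q₆*q₉ - q₇*q₈, q₂*q₆ + q₂*q₇ - q₃*q₅ - q₄*q₅ + q₆*q₉ + q₆*q₁₀ - q₇*q₈ - q₇*q₉; 0, -q₁*q₅ + q₂^2 - q₃*q₇ + q₄*q₆, -q₁*q₆ + q₂*q₃ - q₃*q₉ + q₄*q₈, -q₁*q₆ - q₁*q₇ + q₂*q₃ + q₂*q₄ - q₃*q₉ - q₃*q₁₀ + q₄*q₈ + q₄*q₉; -q₁*q₇ + q₂*q₄ - q₃*q₁₀ + q₄*q₉, -q₁*q₇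 + q₂*q₄ - q₂*q₇ - q₃*q₁₀ + q₄*q₅ + q₄*q₉ - q₆*q₁₀ + q₇*q₉, -q₃*q₇ + q₄*q₆ - q₈*q₁₀ + q₉^2, -q₃*q₇ + q₄*q₆ - q₈*q₁₀ + q₉^2; q₁*q₆ - q₂*q₃ + q₃*q₉ - q₄*q₈, q₁*q₆ - q₂*q₃ + q₂*q₆ - q₃*q₅ + q₃*q₉ - q₄*q₈ + q₆*q₉ - q₇*q₈, 0, -q₃*q₇ + q₄*q₆ - q₈*q₁₀ + q₉^2]) * Nmat).trace : ℝ) = -2*q₁^2*q₅ + 2*q₁*q₂^2 - 4*q₁*q₃*q₇ + 4*q₁*q₄*q₆ - 2*q₁*q₆^2 + 4*q₂*q₃*q₆ - 2*q₃^2*q₅ - 2*q₃^2*q₁₀ + 4*q₃*q₄*q₉ - 4*q₃*q₇*q₈ - 2*q₄^2*q₈ + 4*q₄*q₆*q₈ - 2*q₈^2*q₁₀ + 2*q₈*q₉^2 := by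
    simp [Matrix.trace, Matrix.diag, Matrix.mul_apply, Fin.sum_univ_four, Nmat, Matrix.vecHead, Matrix.vecTail, Matrix.cons_val_zero, Matrix.cons_val_one, Matrix.cons_val_two, Matrix.cons_val_three]
    try ring
  have f21 : (((!![-q₁*q₅ + q₂^2 - q₃*q₇ + q₄*q₆, -q₁*q₅ + q₂^2 - q₃*q₇ + q₄*q₆, q₂*q₆ - q₃*q₅ + q₆*q₉ - q₇*q₈, q₂*q₆ + q₂*q₇ - q₃*q₅ - q₄*q₅ + q₆*q₉ + q₆*q₁₀ - q₇*q₈ - q₇*q₉; 0, -q₁*q₅ + q₂^2 - q₃*q₇ + q₄*q₆, -q₁*q₆ + q₂*q₃ - q₃*q₉ + q₄*q₈, -q₁*q₆ - q₁*q₇ + q₂*q₃ + q₂*q₄ - q₃*q₉ - q₃*q₁₀ + q₄*q₈ + q₄*q₉; -q₁*q₇ + q₂*q₄ - q₃*q₁₀ + q₄*q₉, -q₁*q₇ + q₂*q₄ - q₂*q₇ - q₃*q₁₀ + q₄*q₅ + q₄*q₉ - q₆*q₁₀ + q₇*q₉, -q₃*q₇ + q₄*q₆ - q₈*q₁₀ +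 q₉^2, -q₃*q₇ + q₄*q₆ - q₈*q₁₀ + q₉^2; q₁*q₆ - q₂*q₃ + q₃*q₉ - q₄*q₈, q₁*q₆ - q₂*q₃ + q₂*q₆ - q₃*q₅ + q₃*q₉ - q₄*q₈ + q₆*q₉ - q₇*q₈, 0, -q₃*q₇ + q₄*q₆ - q₈*q₁₀ + q₉^2] : Matrix (Fin 4) (Fin 4) ℝ) * !![-q₂, -q₂ - q₅, -q₆, -q₆ - q₇; q₁, q₁ + q₂, q₃, q₃ + q₄; -q₄, -q₄ - q₇, -q₉, -q₉ - q₁₀; q₃, q₃ + q₆, q₈, q₈ + q₉]).trace : ℝ) = -2*q₁^2*q₅ + 2*q₁*q₂^2 - 4*q₁*q₃*q₇ + 4*q₁*q₄*q₆ - 2*q₁*q₆^2 + 4*q₂*q₃*q₆ - 2*q₃^2*q₅ - 2*q₃^2*q₁₀ + 4*q₃*q₄*q₉ - 4*q₃*q₇*q₈ - 2*q₄^2*q₈ + 4*q₄*q₆*q₈ - 2*q₈^2*q₁₀ + 2*q₈*q₉^2 := by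
    simp [Matrix.trace, Matrix.diag, Matrix.mul_apply, Fin.sum_univ_four, Nmat, Matrix.vecHead, Matrix.vecTail, Matrix.cons_val_zero, Matrix.cons_val_one, Matrix.cons_val_two, Matrix.cons_val_three]
    try ring
  have hgG : g = Gf A := by
    funext r
    rw [hg r]
    simp only [Gf, psi, chi, E, sigma2, pow_two]
  have hhH : h = Hf A := by
    funext r
    rw [hh r]
    simp only [Hf, psi, E, sigma1, pow_two]
  have dgf : deriv g = G1f A := by
    rw [hgG]; funext r; exact (dG A r).deriv
  have dg1 : deriv (G1f A) = G2f A := funext fun r => (dG1 A r).deriv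
  have dg2 : deriv (G2f A) = G3f A := funext fun r => (dG2 A r).deriv
  have dhf : deriv h = H1f A := by
    rw [hhH]; funext r; exact (dH A r).deriv
  have dh1 : deriv (H1f A) = H2f A := funext fun r => (dH1 A r).deriv
  have dh2 : deriv (H2f A) = H3f A := funext fun r => (dH2 A r).deriv
  have i1g : iteratedDeriv 1 g 0 = G1f A 0 := by rw [iteratedDeriv_one, dgf]
  have i2g : iteratedDeriv 2 g 0 = G2f A 0 := by
    rw [show (2:ℕ) = 1 + 1 from rfl, iteratedDeriv_succ', dgf, iteratedDeriv_one, dg1]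
  have i3g : iteratedDeriv 3 g 0 = G3f A 0 := by
    rw [show (3:ℕ) = 2 + 1 from rfl, iteratedDeriv_succ', dgf,
      show (2:ℕ) = 1 + 1 from rfl, iteratedDeriv_succ', dg1, iteratedDeriv_one, dg2]
  have i1h : iteratedDeriv 1 h 0 = H1f A 0 := by rw [iteratedDeriv_one, dhf]
  have i2h : iteratedDeriv 2 h 0 = H2f A 0 := by
    rw [show (2:ℕ) = 1 + 1 from rfl, iteratedDeriv_succ', dhf, iteratedDeriv_one, dh1]
  have i3h : iteratedDeriv 3 h 0 = H3f A 0 := by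
    rw [show (3:ℕ) = 2 + 1 from rfl, iteratedDeriv_succ', dhf,
      show (2:ℕ) = 1 + 1 from rfl, iteratedDeriv_succ', dh1, iteratedDeriv_one, dh2]
  have vG0 : Gf A 0 = 6 := by
    simp only [Gf, psi_zero, chi_zero, fN, fNN]; norm_num
  have vH0 : Hf A 0 = 6 := by
    simp only [Hf, psi_zero, fN]; norm_num
  have vG1 : G1f A 0 = 2*q₁ + 2*q₈ := by
    simp only [G1f, psi_zero, chi_zero, hA, hP1, hP2, fN, fNN, e1, e2, e3, f10, f20, f11, f30, f21]
    ring
  have vG2 : G2f A 0 = -4*q₁*q₅ + 2*q₁*q₈ + 4*q₂^2 - 2*q₃^2 - 8*q₃*q₇ + 8*q₄*q₆ - 4*q₈*q₁₀ + 4*q₉^2 := by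
    simp only [G2f, psi_zero, chi_zero, hA, hP1, hP2, fN, fNN, e1, e2, e3, f10, f20, f11, f30, f21]
    ring
  have vG3 : G3f A 0 = -2*q₁^2*q₅ + 2*q₁*q₂^2 - 4*q₁*q₃*q₇ + 4*q₁*q₄*q₆ - 6*q₁*q₅*q₈ + 4*q₁*q₆^2 - 6*q₁*q₈*q₁₀ + 6*q₁*q₉^2 + 6*q₂^2*q₈ - 8*q₂*q₃*q₆ + 4*q₃^2*q₅ + 4*q₃^2*q₁₀ - 8*q₃*q₄*q₉ - 4*q₃*q₇*q₈ + 4*q₄^2*q₈ + 4*q₄*q₆*q₈ - 2*q₈^2*q₁₀ + 2*q₈*q₉^2 := by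
    simp only [G3f, psi_zero, chi_zero, hA, hP1, hP2, fN, fNN, e1, e2, e3, f10, f20, f11, f30, f21]
    ring
  have vH1 : H1f A 0 = 2*q₁ + 2*q₈ := by
    simp only [H1f, psi_zero, chi_zero, hA, hP1, hP2, fN, fNN, e1, e2, e3, f10, f20, f11, f30, f21]
    ring
  have vH2 : H2f A 0 = (1/2 : ℝ)*q₁^2 - 4*q₁*q₅ + q₁*q₈ + 4*q₂^2 - 8*q₃*q₇ + 8*q₄*q₆ + (1/2 : ℝ)*q₈^2 - 4*q₈*q₁₀ + 4*q₉^2 := by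
    simp only [H2f, psi_zero, chi_zero, hA, hP1, hP2, fN, fNN, e1, e2, e3, f10, f20, f11, f30, f21]
    ring
  have vH3 : H3f A 0 = -5*q₁^2*q₅ + 5*q₁*q₂^2 - 10*q₁*q₃*q₇ + 10*q₁*q₄*q₆ - 3*q₁*q₅*q₈ - 2*q₁*q₆^2 - 3*q₁*q₈*q₁₀ + 3*q₁*q₉^2 + 3*q₂^2*q₈ + 4*q₂*q₃*q₆ - 2*q₃^2*q₅ - 2*q₃^2*q₁₀ + 4*q₃*q₄*q₉ - 10*q₃*q₇*q₈ - 2*q₄^2*q₈ + 10*q₄*q₆*q₈ - 5*q₈^2*q₁₀ + 5*q₈*q₉^2 := by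
    simp only [H3f, psi_zero, chi_zero, hA, hP1, hP2, fN, fNN, e1, e2, e3, f10, f20, f11, f30, f21]
    ring
  refine ⟨?_, ⟨?_, ?_⟩, ?_⟩
  · rw [i1g, i1h, vG1, vH1]
  · rw [i2g, i2h, vG2, vH2]
    nlinarith [sq_nonneg (q₁ - q₈), sq_nonneg q₃]
  · rw [i2g, i2h, vG2, vH2]
    constructor
    · intro hEq
      have hdiff : (q₁ - q₈) ^ 2 / 2 + 2 * q₃ ^ 2 = 0 := by linear_combination -hEq
      have h3sq : q₃ ^ 2 = 0 := by linarith [sq_nonneg (q₁ - q₈), sq_nonneg q₃]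
      have h18sq : (q₁ - q₈) ^ 2 = 0 := by linarith [sq_nonneg (q₁ - q₈), sq_nonneg q₃]
      have h18 := sq_eq_zero_iff.mp h18sq
      exact ⟨sq_eq_zero_iff.mp h3sq, by linarith⟩
    · rintro ⟨h3, h18⟩
      rw [h3, h18]
      ring
  · intro hq3 hq18 hq1 hne
    subst hq3
    subst hq18
    have hsqne : (q₄ - q₆) ^ 2 ≠ 0 := pow_ne_zero 2 (sub_ne_zero.mpr hne)
    have hsq : 0 < (q₄ - q₆) ^ 2 := lt_of_le_of_ne (sq_nonneg _) (Ne.symm hsqne)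
    have hkey : 0 < G3f A 0 - H3f A 0 := by
      rw [vG3, vH3]
      nlinarith [mul_pos hq1 hsq]
    constructor
    · rw [i3g, i3h]; linarith
    · -- small-r positivity via three monotonicity steps
      have c0 : Continuous (fun r => Gf A r - Hf A r) :=
        continuous_iff_continuousAt.2 fun r => ((dG A r).sub (dH A r)).continuousAt
      have c1 : Continuous (fun r => G1f A r - H1f A r) :=
        continuous_iff_continuousAt.2 fun r => ((dG1 A r).sub (dH1 A r)).continuousAt
      have c2 : Continuous (fun r => G2f A r - H2f A r) :=
        continuous_iff_continuousAt.2 fun r => ((dG2 A r).sub (dH2 A r)).continuousAt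
      have hcG3 : Continuous (G3f A) := by
        unfold G3f
        exact (((continuous_const.mul ((cont_psi A _).mul (cont_psi A _))).add
          ((cont_psi A _).mul (cont_psi A _))).sub (cont_chi A _ _)).sub
          (continuous_const.mul (cont_chi A _ _))
      have hcH3 : Continuous (H3f A) := by
        unfold H3f
        exact ((continuous_const.mul ((cont_psi A _).mul (cont_psi A _))).add
          ((cont_psi A _).mul (cont_psi A _))).div_const 2
      have c3 : Continuous (fun r => G3f A r - H3f A r) := hcG3.sub hcH3
      have hD1 : deriv (fun r => Gf A r - Hf A r) = fun r => G1f A r - H1f A r :=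
        funext fun r => ((dG A r).sub (dH A r)).deriv
      have hD2 : deriv (fun r => G1f A r - H1f A r) = fun r => G2f A r - H2f A r :=
        funext fun r => ((dG1 A r).sub (dH1 A r)).deriv
      have hD3 : deriv (fun r => G2f A r - H2f A r) = fun r => G3f A r - H3f A r :=
        funext fun r => ((dG2 A r).sub (dH2 A r)).deriv
      have hnhds : (fun r => G3f A r - H3f A r) ⁻¹' Set.Ioi 0 ∈ nhds (0 : ℝ) :=
        c3.continuousAt.preimage_mem_nhds (Ioi_mem_nhds hkey)
      obtain ⟨ε, hε, hball⟩ := Metric.mem_nhds_iff.mp hnhds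
      have hε2 : 0 < ε / 2 := by linarith
      have s3 : ∀ x ∈ Set.Ioo (0 : ℝ) (ε / 2), 0 < G3f A x - H3f A x := by
        intro x hx
        have hxball : x ∈ Metric.ball (0 : ℝ) ε := by
          rw [Metric.mem_ball, Real.dist_eq, sub_zero, abs_of_pos hx.1]
          linarith [hx.2]
        exact hball hxball
      have s2 : ∀ x ∈ Set.Ioo (0 : ℝ) (ε / 2), 0 < G2f A x - H2f A x := by
        refine pos_of_deriv_pos hε2 c2 (fun x hx => by rw [hD3]; exact s3 x hx) ?_
        rw [vG2, vH2]; ring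
      have s1 : ∀ x ∈ Set.Ioo (0 : ℝ) (ε / 2), 0 < G1f A x - H1f A x := by
        refine pos_of_deriv_pos hε2 c1 (fun x hx => by rw [hD2]; exact s2 x hx) ?_
        rw [vG1, vH1]; ring
      have s0 : ∀ x ∈ Set.Ioo (0 : ℝ) (ε / 2), 0 < Gf A x - Hf A x := by
        refine pos_of_deriv_pos hε2 c0 (fun x hx => by rw [hD1]; exact s1 x hx) ?_
        rw [vG0, vH0]; ring
      refine ⟨ε / 2, hε2, fun r hr => ?_⟩
      have := s0 r hr
      rw [hgG, hhH]
      linarith
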